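/- Let E be a field complete with respect to a nonarchimedean absolute value extending the p-adic absolute value of ℚ_p. For every continuous function f : ℤ_p × ℤ_p → E there exists a unique family (a_{k,l})_{k,l ≥ 0} of elements of E with a_{k,l} → 0 as k + l → ∞ such that f(x,y) = ∑_{k,l ≥ 0} a_{k,l}·binom(x,k)·binom(y,l), the series converging uniformly on ℤ_p × ℤ_p; moreover sup_{(x,y) ∈ ℤ_p²} |f(x,y)| = sup_{k,l} |a_{k,l}|. -/

import Mathlib

set_option linter.unusedSectionVars false

open Filter Finset IsUltrametricDist PadicInt
open scoped fwdDiff Topology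

namespace TwoVarMahler

variable {p : ℕ} [hp : Fact p.Prime] {E : Type*}
  [NormedAddCommGroup E] [Module ℤ_[p] E] [IsBoundedSMul ℤ_[p] E] [IsUltrametricDist E] [CompleteSpace E]

noncomputable def rowA (f : C(ℤ_[p] × ℤ_[p], E)) (k : ℕ) : C(ℤ_[p], E) :=
  (Δ_[1])^[k] ⇑f.curry 0

noncomputable def coeff (f : C(ℤ_[p] × ℤ_[p], E)) (kl : ℕ × ℕ) : E :=
  (Δ_[1])^[kl.2] ⇑(rowA f kl.1) 0

lemma norm_curry_le (f : C(ℤ_[p] × ℤ_[p], E)) : ‖f.curry‖ ≤ ‖f‖ := by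
  refine (ContinuousMap.norm_le _ (norm_nonneg f)).2 fun x ↦ ?_
  refine (ContinuousMap.norm_le _ (norm_nonneg f)).2 fun y ↦ ?_
  exact f.norm_coe_le_norm (x, y)

lemma norm_rowA_le (f : C(ℤ_[p] × ℤ_[p], E)) (k : ℕ) : ‖rowA f k‖ ≤ ‖f‖ :=
  (IsUltrametricDist.norm_fwdDiff_iter_apply_le 1 f.curry 0 k).trans (norm_curry_le f)

lemma norm_coeff_le_rowA (f : C(ℤ_[p] × ℤ_[p], E)) (kl : ℕ × ℕ) :
    ‖coeff f kl‖ ≤ ‖rowA f kl.1‖ :=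
  IsUltrametricDist.norm_fwdDiff_iter_apply_le 1 (rowA f kl.1) 0 kl.2

lemma norm_coeff_le (f : C(ℤ_[p] × ℤ_[p], E)) (kl : ℕ × ℕ) : ‖coeff f kl‖ ≤ ‖f‖ :=
  (norm_coeff_le_rowA f kl).trans (norm_rowA_le f kl.1)

lemma tendsto_rowA (f : C(ℤ_[p] × ℤ_[p], E)) : Tendsto (rowA f) atTop (𝓝 0) :=
  PadicInt.fwdDiff_tendsto_zero f.curry

lemma tendsto_coeff (f : C(ℤ_[p] × ℤ_[p], E)) :
    Tendsto (coeff f) (comap (fun kl : ℕ × ℕ => kl.1 + kl.2) atTop) (𝓝 0) := by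
  rw [NormedAddCommGroup.tendsto_nhds_zero]
  intro ε hε
  obtain ⟨K, hK⟩ := eventually_atTop.mp
    (NormedAddCommGroup.tendsto_nhds_zero.mp (tendsto_rowA f) ε hε)
  have hrow : ∀ k, ∃ L, ∀ l ≥ L, ‖coeff f (k, l)‖ < ε := fun k =>
    eventually_atTop.mp
      (NormedAddCommGroup.tendsto_nhds_zero.mp (PadicInt.fwdDiff_tendsto_zero (rowA f k)) ε hε)
  choose L hL using hrow
  rw [eventually_comap]
  filter_upwards [eventually_ge_atTop (K + (Finset.range K).sup L)] with n hn kl hkl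
  rcases le_or_gt K kl.1 with h | h
  · exact lt_of_le_of_lt (norm_coeff_le_rowA f kl) (hK _ h)
  · have hsup : L kl.1 ≤ (Finset.range K).sup L := Finset.le_sup (Finset.mem_range.mpr h)
    have : L kl.1 ≤ kl.2 := by omega
    simpa using hL kl.1 kl.2 this

lemma norm_mahler_mul_le_one (k l : ℕ) (x y : ℤ_[p]) :
    ‖mahler k x * mahler l y‖ ≤ 1 := by
  rw [_root_.norm_mul, mahler_apply, mahler_apply]
  exact mul_le_one₀ (PadicInt.norm_le_one _) (norm_nonneg _) (PadicInt.norm_le_one _)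

noncomputable def term (a : ℕ × ℕ → E) (kl : ℕ × ℕ) : C(ℤ_[p] × ℤ_[p], E) :=
  ⟨fun xy => (mahler kl.1 xy.1 * mahler kl.2 xy.2) • a kl,
    (((mahler kl.1).continuous.comp continuous_fst).mul
      ((mahler kl.2).continuous.comp continuous_snd)).smul continuous_const⟩

lemma term_apply (a : ℕ × ℕ → E) (kl : ℕ × ℕ) (xy : ℤ_[p] × ℤ_[p]) :
    term a kl xy = (mahler kl.1 xy.1 * mahler kl.2 xy.2) • a kl := rfl

lemma norm_smul_mahler_le (a : ℕ × ℕ → E) (kl : ℕ × ℕ) (x y : ℤ_[p]) :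
    ‖(mahler kl.1 x * mahler kl.2 y) • a kl‖ ≤ ‖a kl‖ := by
  refine (norm_smul_le _ _).trans ?_
  exact mul_le_of_le_one_left (norm_nonneg _) (norm_mahler_mul_le_one _ _ _ _)

lemma norm_term_le (a : ℕ × ℕ → E) (kl : ℕ × ℕ) : ‖term (p := p) a kl‖ ≤ ‖a kl‖ := by
  refine (ContinuousMap.norm_le _ (norm_nonneg _)).2 fun xy => ?_
  exact norm_smul_mahler_le a kl xy.1 xy.2

lemma tendsto_sum_cofinite : Tendsto (fun kl : ℕ × ℕ => kl.1 + kl.2) cofinite atTop := by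
  rw [tendsto_atTop]
  intro N
  rw [eventually_cofinite]
  refine Set.Finite.subset ((Finset.range N ×ˢ Finset.range N).finite_toSet) fun kl h => ?_
  simp only [Set.mem_setOf_eq, not_le] at h
  simp only [Finset.coe_product, Set.mem_prod, Finset.mem_coe, Finset.mem_range]
  omega

lemma tendsto_cofinite_of_comap {a : ℕ × ℕ → E}
    (h : Tendsto a (comap (fun kl : ℕ × ℕ => kl.1 + kl.2) atTop) (𝓝 0)) :
    Tendsto a cofinite (𝓝 0) :=
  h.mono_left (tendsto_iff_comap.mp tendsto_sum_cofinite)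

lemma summable_aux {F : Type*} [NormedAddCommGroup F] [IsUltrametricDist F] [CompleteSpace F]
    {a : ℕ × ℕ → E} (ha : Tendsto a (comap (fun kl : ℕ × ℕ => kl.1 + kl.2) atTop) (𝓝 0))
    {g : ℕ × ℕ → F} (hg : ∀ kl, ‖g kl‖ ≤ ‖a kl‖) : Summable g := by
  refine NonarchimedeanAddGroup.summable_of_tendsto_cofinite_zero ?_
  rw [tendsto_zero_iff_norm_tendsto_zero]
  exact squeeze_zero (fun _ => norm_nonneg _) hg
    (tendsto_zero_iff_norm_tendsto_zero.mp (tendsto_cofinite_of_comap ha))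

lemma hasSum_coeff_apply (f : C(ℤ_[p] × ℤ_[p], E)) (x y : ℤ_[p]) :
    HasSum (fun kl : ℕ × ℕ => (mahler kl.1 x * mahler kl.2 y) • coeff f kl) (f (x, y)) := by
  have h1 : HasSum (fun k => mahler k x • rowA f k) (f.curry x) := by
    have := (PadicInt.hasSum_mahler f.curry).mapL (ContinuousMap.evalCLM ℤ_[p] x)
    simp only [ContinuousMap.evalCLM_apply, PadicInt.mahlerTerm_apply] at this; exact this
  have h1' : HasSum (fun k => mahler k x • rowA f k y) (f (x, y)) := by
    have := h1.mapL (ContinuousMap.evalCLM ℤ_[p] y)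
    simp only [ContinuousMap.evalCLM_apply, map_smul] at this; exact this
  have h2 : ∀ k, HasSum (fun l => (mahler k x * mahler l y) • coeff f (k, l))
      (mahler k x • rowA f k y) := by
    intro k
    have h := (PadicInt.hasSum_mahler (rowA f k)).mapL (ContinuousMap.evalCLM ℤ_[p] y)
    simp only [ContinuousMap.evalCLM_apply, PadicInt.mahlerTerm_apply] at h
    have := h.const_smul (mahler k x)
    simp only [mul_smul]; exact this
  have hs : Summable (fun kl : ℕ × ℕ => (mahler kl.1 x * mahler kl.2 y) • coeff f kl) :=
    summable_aux (tendsto_coeff f) (fun kl => norm_smul_mahler_le _ kl x y)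
  have h3 := hs.hasSum.prod_fiberwise h2
  have h4 : (∑' kl : ℕ × ℕ, (mahler kl.1 x * mahler kl.2 y) • coeff f kl) = f (x, y) :=
    h3.unique h1'
  exact h4 ▸ hs.hasSum

lemma hasSum_term (f : C(ℤ_[p] × ℤ_[p], E)) : HasSum (term (coeff f)) f := by
  have hs : Summable (term (p := p) (coeff f)) := by
    exact summable_aux (tendsto_coeff f) (fun kl => norm_term_le _ kl)
  have h := hs.hasSum
  have heq : (∑' kl : ℕ × ℕ, term (coeff f) kl) = f := by
    ext xy
    have h4 := h.mapL (ContinuousMap.evalCLM ℤ_[p] xy)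
    simp only [ContinuousMap.evalCLM, term_apply] at h4
    have h5 := hasSum_coeff_apply f xy.1 xy.2
    exact h4.unique h5
  rwa [heq] at h

/-- Uniqueness: any decaying family whose double Mahler series sums pointwise to `f`
agrees with `coeff f`. -/
lemma eq_coeff_of_hasSum {f : C(ℤ_[p] × ℤ_[p], E)} {b : ℕ × ℕ → E}
    (hb : Tendsto b (comap (fun kl : ℕ × ℕ => kl.1 + kl.2) atTop) (𝓝 0))
    (hbf : ∀ x y : ℤ_[p],
      HasSum (fun kl : ℕ × ℕ => (mahler kl.1 x * mahler kl.2 y) • b kl) (f (x, y))) :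
    b = coeff f := by
  have hb_l : ∀ k, Tendsto (fun l => b (k, l)) atTop (𝓝 0) := by
    intro k
    refine hb.comp ?_
    rw [tendsto_comap_iff]
    exact tendsto_atTop_mono (fun l => Nat.le_add_left l k) tendsto_id
  set c : ℕ → C(ℤ_[p], E) := fun k => PadicInt.mahlerSeries (fun l => b (k, l)) with hc
  have hc_sum : ∀ k, HasSum (fun l => PadicInt.mahlerTerm (p := p) (b (k, l)) l) (c k) := fun k =>
    PadicInt.hasSum_mahlerSeries (hb_l k)
  have tendsto_c : Tendsto c atTop (𝓝 0) := by
    rw [NormedAddCommGroup.tendsto_nhds_zero]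
    intro ε hε
    have h2 := NormedAddCommGroup.tendsto_nhds_zero.mp hb (ε / 2) (by positivity)
    rw [eventually_comap] at h2
    obtain ⟨N, hN⟩ := eventually_atTop.mp h2
    filter_upwards [eventually_ge_atTop N] with k hk
    have hbound : ∀ l, ‖PadicInt.mahlerTerm (p := p) (b (k, l)) l‖ ≤ ε / 2 := by
      intro l
      rw [PadicInt.norm_mahlerTerm]
      exact (hN (k + l) (le_add_right hk) (k, l) rfl).le
    have : ‖c k‖ ≤ ε / 2 := by
      rw [← (hc_sum k).tsum_eq]
      exact IsUltrametricDist.norm_tsum_le_of_forall_le_of_nonneg (by positivity) hbound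
    linarith
  have hG := PadicInt.hasSum_mahlerSeries (p := p) tendsto_c
  have hGf : PadicInt.mahlerSeries c = f.curry := by
    ext x y
    have h1 : HasSum (fun k => mahler k x • c k) (PadicInt.mahlerSeries c x) := by
      have := hG.mapL (ContinuousMap.evalCLM ℤ_[p] x)
      simpa only [ContinuousMap.evalCLM_apply, PadicInt.mahlerTerm_apply] using this
    have h1' : HasSum (fun k => mahler k x • c k y) (PadicInt.mahlerSeries c x y) := by
      have := h1.mapL (ContinuousMap.evalCLM ℤ_[p] y)
      simpa only [ContinuousMap.evalCLM_apply, map_smul] using this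
    have h2 : ∀ k, HasSum (fun l => (mahler k x * mahler l y) • b (k, l))
        (mahler k x • c k y) := by
      intro k
      have h := (hc_sum k).mapL (ContinuousMap.evalCLM ℤ_[p] y)
      simp only [ContinuousMap.evalCLM_apply, PadicInt.mahlerTerm_apply] at h
      have := h.const_smul (mahler k x)
      simpa only [mul_smul] using this
    have h3 := (hbf x y).prod_fiberwise h2
    exact h1'.unique h3
  funext kl
  have e1 : (Δ_[1])^[kl.1] ⇑(PadicInt.mahlerSeries (p := p) c) 0 = c kl.1 :=
    PadicInt.fwdDiff_mahlerSeries tendsto_c kl.1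
  have e2 : rowA f kl.1 = c kl.1 := by
    rw [rowA, ← hGf]
    exact e1
  have e3 : coeff f kl = (Δ_[1])^[kl.2] ⇑(c kl.1) 0 := by rw [coeff, e2]
  rw [e3, hc]
  exact (PadicInt.fwdDiff_mahlerSeries (hb_l kl.1) kl.2).symm

end TwoVarMahler



open Filter

open TwoVarMahler in
/-- two-variable Mahler expansion.  Let `E` be a field complete with
respect to a nonarchimedean absolute value extending the `p`-adic absolute value of
`ℚ_p`.  Every continuous `f : ℤ_p × ℤ_p → E` has a unique expansion
`f (x, y) = ∑ a_{k,l} · binom(x,k) · binom(y,l)` with coefficients `a_{k,l} → 0` as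
`k + l → ∞`, the series converging uniformly on `ℤ_p × ℤ_p`; moreover the sup norm of
`f` equals the sup of the `‖a_{k,l}‖`.  Here `binom (x, k) = mahler k x` is the `k`-th
Mahler basis function `ℤ_p → ℚ_p`, viewed in `E` via the embedding `ℚ_p → E`. -/
theorem exists_unique_two_variable_mahler_expansion
    {p : ℕ} [Fact p.Prime]
    (E : Type*) [NormedField E] [CompleteSpace E] [IsUltrametricDist E] [Algebra ℚ_[p] E]
    (hisom : ∀ q : ℚ_[p], ‖algebraMap ℚ_[p] E q‖ = ‖q‖)
    (f : ℤ_[p] × ℤ_[p] → E) (hf : Continuous f) :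
    ∃ a : ℕ × ℕ → E,
      (Tendsto a (comap (fun kl : ℕ × ℕ => kl.1 + kl.2) atTop) (nhds 0)) ∧
      (TendstoUniformly
        (fun (s : Finset (ℕ × ℕ)) (xy : ℤ_[p] × ℤ_[p]) =>
          ∑ kl ∈ s, a kl * algebraMap ℚ_[p] E (mahler kl.1 xy.1 * mahler kl.2 xy.2))
        f atTop) ∧
      ((⨆ xy : ℤ_[p] × ℤ_[p], ‖f xy‖) = ⨆ kl : ℕ × ℕ, ‖a kl‖) ∧
      (∀ b : ℕ × ℕ → E,
        Tendsto b (comap (fun kl : ℕ × ℕ => kl.1 + kl.2) atTop) (nhds 0) →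
        TendstoUniformly
          (fun (s : Finset (ℕ × ℕ)) (xy : ℤ_[p] × ℤ_[p]) =>
            ∑ kl ∈ s, b kl * algebraMap ℚ_[p] E (mahler kl.1 xy.1 * mahler kl.2 xy.2))
          f atTop → b = a) := by
  letI : NormedSpace ℚ_[p] E :=
    { norm_smul_le := fun q e => le_of_eq (by rw [Algebra.smul_def, _root_.norm_mul, hisom]) }
  letI : Algebra ℤ_[p] E := ((algebraMap ℚ_[p] E).comp (algebraMap ℤ_[p] ℚ_[p])).toAlgebra
  haveI : IsBoundedSMul ℤ_[p] E := IsBoundedSMul.of_norm_smul_le fun r x => le_of_eq (by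
    change ‖algebraMap ℚ_[p] E (r : ℚ_[p]) * x‖ = _
    rw [_root_.norm_mul, hisom, PadicInt.padic_norm_e_of_padicInt])
  set F : C(ℤ_[p] × ℤ_[p], E) := ⟨f, hf⟩ with hF
  have key : ∀ (a : ℕ × ℕ → E) (kl : ℕ × ℕ) (x y : ℤ_[p]),
      a kl * algebraMap ℚ_[p] E (mahler kl.1 x * mahler kl.2 y)
        = (mahler kl.1 x * mahler kl.2 y) • a kl := fun a kl x y => by
    rw [Algebra.smul_def, mul_comm]
    rfl
  refine ⟨coeff F, tendsto_coeff F, ?_, ?_, ?_⟩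
  · have hU := ContinuousMap.tendsto_iff_tendstoUniformly.mp (hasSum_term F)
    have heq : (fun (s : Finset (ℕ × ℕ)) (xy : ℤ_[p] × ℤ_[p]) =>
        ∑ kl ∈ s, coeff F kl * algebraMap ℚ_[p] E (mahler kl.1 xy.1 * mahler kl.2 xy.2))
        = fun s xy => (∑ kl ∈ s, term (coeff F) kl) xy := by
      funext s xy
      rw [ContinuousMap.sum_apply]
      exact Finset.sum_congr rfl fun kl _ => key _ kl xy.1 xy.2
    rw [heq]
    exact hU
  · have hbdd : BddAbove (Set.range fun kl : ℕ × ℕ => ‖coeff F kl‖) :=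
      ⟨‖F‖, by rintro r ⟨kl, rfl⟩; exact norm_coeff_le F kl⟩
    apply le_antisymm
    · refine ciSup_le fun xy => ?_
      have h : f xy = ∑' kl : ℕ × ℕ, (mahler kl.1 xy.1 * mahler kl.2 xy.2) • coeff F kl :=
        ((hasSum_coeff_apply F xy.1 xy.2).tsum_eq).symm
      rw [h]
      refine (IsUltrametricDist.norm_tsum_le _).trans ?_
      exact ciSup_mono hbdd fun kl => norm_smul_mahler_le _ kl xy.1 xy.2
    · refine ciSup_le fun kl => ?_
      have h := norm_coeff_le F kl
      rwa [ContinuousMap.norm_eq_iSup_norm] at h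
  · intro b hb hbU
    have hbf : ∀ x y : ℤ_[p],
        HasSum (fun kl : ℕ × ℕ => (mahler kl.1 x * mahler kl.2 y) • b kl) (f (x, y)) := by
      intro x y
      have ht := hbU.tendsto_at (x, y)
      have heq : (fun s : Finset (ℕ × ℕ) =>
          ∑ kl ∈ s, (mahler kl.1 x * mahler kl.2 y) • b kl)
          = fun s => ∑ kl ∈ s, b kl * algebraMap ℚ_[p] E (mahler kl.1 x * mahler kl.2 y) := by
        funext s
        exact Finset.sum_congr rfl fun kl _ => (key b kl x y).symm
      show Tendsto _ atTop _
      rw [heq]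
      exact ht
    exact eq_coeff_of_hasSum hb hbf
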